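/- arXiv:2503.19816 — 3 statements merged into one kernel-verified Lean document; each statement's English description precedes it below -/
import Mathlib

section
/- Let R be a commutative ring and let a, b ∈ R be a unimodular pair, i.e. Ideal.span {a, b} = ⊤. Then for every t ∈ R the pair (b − a, t·a + (1 − t)·b) is again unimodular, i.e. Ideal.span {b − a, t·a + (1 − t)·b} = ⊤. (At t = 0 this pair equals (b − a, b), and at t = 1 it equals (b − a, a).) -/
/-- If `(a, b)` is a unimodular pair in a commutative ring `R`, then for every `t : R`
the pair `(b - a, t * a + (1 - t) * b)` is again unimodular.  This is the second
naive `𝔸¹`-homotopy in the proof of Lemma 2.1. -/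
theorem unimodular_second_homotopy {R : Type*} [CommRing R] (a b : R)
    (h : Ideal.span ({a, b} : Set R) = ⊤) (t : R) :
    Ideal.span ({b - a, t * a + (1 - t) * b} : Set R) = ⊤ := by
  rw [eq_top_iff, ← h, Ideal.span_le]
  rintro x (rfl | rfl)
  · rw [SetLike.mem_coe, Ideal.mem_span_pair]
    exact ⟨-(1 - t), 1, by ring⟩
  · rw [SetLike.mem_coe, Ideal.mem_span_pair]
    exact ⟨t, 1, by ring⟩
end

section
/- Let R be a commutative ring. Define three maps H₁, H₂, H₃ : R × R × R → R × R by H₁(a, b, t) = (b − t·a, a), H₂(a, b, t) = (b − a, t·a + (1 − t)·b), and H₃(a, b, t) = (t·b − a, b). Then: (i) for every unimodular pair (a, b) (i.e. Ideal.span {a, b} = ⊤) and every t ∈ R, each of H₁(a, b, t), H₂(a, b, t), H₃(a, b, t) is again a unimodular pair; (ii) H₁(a, b, 0) = (b, a) and H₃(a, b, 0) = (−a, b); (iii) the endpoints match in a chain: H₁(a, b, 1) = H₂(a, b, 1) = (b − a, a) and H₂(a, b, 0) = H₃(a, b, 1) = (b − a, b). In particular, the swap map (a, b) ↦ (b, a)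 and the map (a, b) ↦ (−a, b) on unimodular pairs are connected by a chain of three naive 𝔸¹-homotopies through unimodular pairs, uniformly in R via polynomials with integer coefficients. -/
open Ideal

/-- The first elementary homotopy: `H₁ (a, b, t) = (b - t·a, a)`. -/
def H₁ {R : Type*} [CommRing R] (p : R × R × R) : R × R :=
  (p.2.1 - p.2.2 * p.1, p.1)

/-- The second elementary homotopy: `H₂ (a, b, t) = (b - a, t·a + (1 - t)·b)`. -/
def H₂ {R : Type*} [CommRing R] (p : R × R × R) : R × R :=
  (p.2.1 - p.1, p.2.2 * p.1 + (1 - p.2.2) * p.2.1)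

/-- The third elementary homotopy: `H₃ (a, b, t) = (t·b - a, b)`. -/
def H₃ {R : Type*} [CommRing R] (p : R × R × R) : R × R :=
  (p.2.2 * p.2.1 - p.1, p.2.1)

lemma span_top_of_mem {R : Type*} [CommRing R] {a b x y : R}
    (h : Ideal.span ({a, b} : Set R) = ⊤)
    (ha : a ∈ Ideal.span ({x, y} : Set R)) (hb : b ∈ Ideal.span ({x, y} : Set R)) :
    Ideal.span ({x, y} : Set R) = ⊤ := by
  rw [eq_top_iff, ← h, Ideal.span_le]
  intro z hz
  simp only [Set.mem_insert_iff, Set.mem_singleton_iff] at hz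
  rcases hz with rfl | rfl
  exacts [ha, hb]

/-- The chain of three naive `𝔸¹`-homotopies from the proof of Lemma 2.1:
`H₁`, `H₂`, `H₃` preserve unimodularity, `H₁` starts at the swap map, `H₃` starts at
`(a, b) ↦ (-a, b)`, and the endpoints of consecutive homotopies match. -/
theorem unimodular_homotopy_chain (R : Type*) [CommRing R] :
    (∀ a b t : R, Ideal.span ({a, b} : Set R) = ⊤ →
      Ideal.span ({(H₁ (a, b, t)).1, (H₁ (a, b, t)).2} : Set R) = ⊤ ∧
      Ideal.span ({(H₂ (a, b, t)).1, (H₂ (a, b, t)).2} : Set R) = ⊤ ∧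
      Ideal.span ({(H₃ (a, b, t)).1, (H₃ (a, b, t)).2} : Set R) = ⊤) ∧
    (∀ a b : R, H₁ (a, b, (0 : R)) = (b, a) ∧ H₃ (a, b, (0 : R)) = (-a, b)) ∧
    (∀ a b : R,
      H₁ (a, b, (1 : R)) = (b - a, a) ∧ H₂ (a, b, (1 : R)) = (b - a, a) ∧
      H₂ (a, b, (0 : R)) = (b - a, b) ∧ H₃ (a, b, (1 : R)) = (b - a, b)) := by
  refine ⟨fun a b t h => ?_, fun a b => by simp [H₁, H₃], fun a b => by
    refine ⟨?_, ?_, ?_, ?_⟩ <;> simp [H₁, H₂, H₃]⟩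
  refine ⟨?_, ?_, ?_⟩
  · exact span_top_of_mem h (Ideal.mem_span_pair.2 ⟨0, 1, by simp [H₁]⟩)
      (Ideal.mem_span_pair.2 ⟨1, t, by simp only [H₁]; ring⟩)
  · exact span_top_of_mem h (Ideal.mem_span_pair.2 ⟨t - 1, 1, by simp only [H₂]; ring⟩)
      (Ideal.mem_span_pair.2 ⟨t, 1, by simp only [H₂]; ring⟩)
  · exact span_top_of_mem h (Ideal.mem_span_pair.2 ⟨-1, t, by simp only [H₃]; ring⟩)
      (Ideal.mem_span_pair.2 ⟨0, 1, by simp [H₃]⟩)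
end

section
/- Let Q denote the quotient topological space (I × I)/∂(I × I), where I = [0, 1] is the unit interval, the boundary ∂(I × I) = {(x, y) ∈ I × I : x ∈ {0, 1} or y ∈ {0, 1}} is collapsed to a single point q₀, and Q is pointed at q₀. Then there is a well-defined continuous pointed map f : Q → Q sending the class of (c, b) to the class of ((1 − c)·b, (1 − c)·(1 − b)/(1 − (1 − c)·b)) whenever (c, b) ≠ (0, 1), and sending the class of (0, 1) (which equals q₀) to q₀; and f is pointed homotopic to the identity of Q, i.e. there exists a continuous H : Q × I → Q with H(x, 0) = f(x), H(x, 1) = x for all x ∈ Q, and H(q₀, s) = q₀ for all s ∈ I. -/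
open unitInterval Set

/-- The boundary of the unit square `I × I`. -/
def squareBoundary : Set (I × I) :=
  {p | p.1 = 0 ∨ p.1 = 1 ∨ p.2 = 0 ∨ p.2 = 1}

/-- The setoid on `I × I` collapsing the boundary of the square to a point. -/
def squareCollapse : Setoid (I × I) where
  r p q := p = q ∨ (p ∈ squareBoundary ∧ q ∈ squareBoundary)
  iseqv := by
    constructor
    · intro x; exact Or.inl rfl
    · rintro x y (rfl | ⟨hx, hy⟩)
      · exact Or.inl rfl
      · exact Or.inr ⟨hy, hx⟩
    · rintro x y z (rfl | ⟨hx, hy⟩) h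
      · exact h
      · rcases h with rfl | ⟨hy', hz⟩
        · exact Or.inr ⟨hx, hy⟩
        · exact Or.inr ⟨hx, hz⟩

/-- The quotient space `Q = (I × I)/∂(I × I)`, with the quotient topology. -/
def SquareQuotient : Type := Quotient squareCollapse

instance : TopologicalSpace SquareQuotient := instTopologicalSpaceQuotient

/-- The base point `q₀` of `Q`: the class of the collapsed boundary. -/
def squareBasePoint : SquareQuotient := Quotient.mk squareCollapse ((0 : I), (1 : I))

namespace SigmaRep

noncomputable section

/-- Clamping a real number into the unit interval. -/
def cl (x : ℝ) : I := projIcc 0 1 zero_le_one x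

lemma continuous_cl : Continuous cl := continuous_projIcc (h := zero_le_one)

lemma cl_coe (a : I) : cl (a : ℝ) = a := by
  simp [cl]

lemma cl_coe_of_eq {x : ℝ} {a : I} (h : x = (a : ℝ)) : cl x = a := by
  rw [h, cl_coe]

lemma cl_zero : cl 0 = 0 := cl_coe_of_eq (by norm_num)
lemma cl_one : cl 1 = 1 := cl_coe_of_eq (by norm_num)

/-- Clamping a pair. -/
def clp (v : ℝ × ℝ) : I × I := (cl v.1, cl v.2)

lemma continuous_clp : Continuous clp :=
  (continuous_cl.comp continuous_fst).prodMk (continuous_cl.comp continuous_snd)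

/-- The quotient projection. -/
def mkq : I × I → SquareQuotient := Quotient.mk squareCollapse

lemma continuous_mkq : Continuous mkq := continuous_quot_mk

lemma base_mem_boundary : ((0 : I), (1 : I)) ∈ squareBoundary := Or.inl rfl

lemma mkq_eq_base {p : I × I} (h : p ∈ squareBoundary) : mkq p = squareBasePoint :=
  Quotient.sound (Or.inr ⟨h, base_mem_boundary⟩)

lemma mkq_eq_mkq_of_boundary {p q : I × I} (hp : p ∈ squareBoundary)
    (hq : q ∈ squareBoundary) : mkq p = mkq q :=
  Quotient.sound (Or.inr ⟨hp, hq⟩)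

/-! ### The three phases of the homotopy, as real formulas -/

/-- Phase 1 (with `(x, y) = (b, 1-c)`): straight line from `B∘R` to `C∘R`. -/
def P1 (x y t : ℝ) : ℝ × ℝ := (x * (y + t * (1 - y)), y * (1 - x) / (1 - x * y))

/-- Phase 2: straight line from `C∘R` to `R`. -/
def P2 (x y t : ℝ) : ℝ × ℝ := (x, y * ((1 - t) * (1 - x) / (1 - x * y) + t))

/-- Phase 3: sup-norm-corrected rotation from `R` to the identity. -/
def A1 (c b t : ℝ) : ℝ := t * (c - 2⁻¹) - (t - 1) * (b - 2⁻¹)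
def A2 (c b t : ℝ) : ℝ := t * (b - 2⁻¹) + (t - 1) * (c - 2⁻¹)
def NN (c b : ℝ) : ℝ := |c - 2⁻¹| ⊔ |b - 2⁻¹|
def MM (c b t : ℝ) : ℝ := |A1 c b t| ⊔ |A2 c b t|

def P3 (c b t : ℝ) : ℝ × ℝ :=
  (2⁻¹ + A1 c b t * (NN c b / MM c b t), 2⁻¹ + A2 c b t * (NN c b / MM c b t))

lemma A_sq (c b t : ℝ) :
    (A1 c b t) ^ 2 + (A2 c b t) ^ 2 =
      (t ^ 2 + (t - 1) ^ 2) * ((c - 2⁻¹) ^ 2 + (b - 2⁻¹) ^ 2) := by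
  simp only [A1, A2]; ring

lemma NN_nonneg (c b : ℝ) : 0 ≤ NN c b := le_trans (abs_nonneg _) (le_max_left _ _)

lemma MM_nonneg (c b t : ℝ) : 0 ≤ MM c b t := le_trans (abs_nonneg _) (le_max_left _ _)

lemma MM_pos {c b : ℝ} (h : NN c b ≠ 0) (t : ℝ) : 0 < MM c b t := by
  rcases (MM_nonneg c b t).lt_or_eq with h' | h'
  · exact h'
  · exfalso
    have h1 : |A1 c b t| = 0 := le_antisymm (h'.symm ▸ le_max_left _ _) (abs_nonneg _)
    have h2 : |A2 c b t| = 0 := le_antisymm (h'.symm ▸ le_max_right _ _) (abs_nonneg _)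
    rw [abs_eq_zero] at h1 h2
    have hsq := A_sq c b t
    rw [h1, h2] at hsq
    have ht : 0 < t ^ 2 + (t - 1) ^ 2 := by nlinarith
    have hw : (c - 2⁻¹) ^ 2 + (b - 2⁻¹) ^ 2 = 0 := by
      rcases mul_eq_zero.1 (by linarith [hsq] : (t ^ 2 + (t - 1) ^ 2) * ((c - 2⁻¹) ^ 2 + (b - 2⁻¹) ^ 2) = 0) with h | h
      · exact absurd h ht.ne'
      · exact h
    have hc : c - 2⁻¹ = 0 := by nlinarith
    have hb : b - 2⁻¹ = 0 := by nlinarith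
    apply h
    simp [NN, hc, hb]

/-- The key bound: each output coordinate of `P3` stays within `NN` of the center. -/
lemma abs_P3_le {c b t a : ℝ} (ha : |a| ≤ MM c b t) :
    |a * (NN c b / MM c b t)| ≤ NN c b := by
  rcases eq_or_ne (NN c b) 0 with h | h
  · -- then MM may be anything; but if MM = 0 then a = 0.
    rcases eq_or_ne (MM c b t) 0 with hm | hm
    · have : a = 0 := abs_eq_zero.1 (le_antisymm (hm ▸ ha) (abs_nonneg _))
      simp [this, NN_nonneg]
    · rw [h]
      simp [NN_nonneg, abs_nonneg]
  · have hm := MM_pos h t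
    rw [abs_mul, abs_div, abs_of_nonneg (NN_nonneg c b), abs_of_pos hm]
    calc |a| * (NN c b / MM c b t) ≤ MM c b t * (NN c b / MM c b t) := by
          apply mul_le_mul_of_nonneg_right ha (div_nonneg (NN_nonneg c b) hm.le)
      _ = NN c b := by field_simp

lemma P3_zero (c b : ℝ) : P3 c b 0 = (b, 1 - c) := by
  have h1 : A1 c b 0 = b - 2⁻¹ := by simp only [A1]; ring
  have h2 : A2 c b 0 = -(c - 2⁻¹) := by simp only [A2]; ring
  rcases eq_or_ne (NN c b) 0 with h | h
  · have hc : |c - 2⁻¹| = 0 := le_antisymm (h ▸ le_max_left _ _) (abs_nonneg _)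
    have hb : |b - 2⁻¹| = 0 := le_antisymm (h ▸ le_max_right _ _) (abs_nonneg _)
    rw [abs_eq_zero] at hc hb
    simp only [P3, h1, h2, hb, hc]
    norm_num
    constructor <;> linarith
  · have hm : MM c b 0 = NN c b := by
      simp only [MM, NN, h1, h2, abs_neg]
      exact max_comm _ _
    simp only [P3, h1, h2, hm, div_self h]
    rw [Prod.mk.injEq]
    constructor <;> ring
lemma P3_one (c b : ℝ) : P3 c b 1 = (c, b) := by
  have h1 : A1 c b 1 = c - 2⁻¹ := by simp only [A1]; ring
  have h2 : A2 c b 1 = b - 2⁻¹ := by simp only [A2]; ring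
  rcases eq_or_ne (NN c b) 0 with h | h
  · have hc : |c - 2⁻¹| = 0 := le_antisymm (h ▸ le_max_left _ _) (abs_nonneg _)
    have hb : |b - 2⁻¹| = 0 := le_antisymm (h ▸ le_max_right _ _) (abs_nonneg _)
    rw [abs_eq_zero] at hc hb
    simp only [P3, h1, h2, hb, hc]
    norm_num
    constructor <;> linarith
  · have hm : MM c b 1 = NN c b := by simp only [MM, NN, h1, h2]
    simp only [P3, h1, h2, hm, div_self h]
    rw [Prod.mk.injEq]
    constructor <;> ring

/-! ### Boundary preservation -/

lemma mem_boundary_coe {p : I × I}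
    (h : (p.1 : ℝ) = 0 ∨ (p.1 : ℝ) = 1 ∨ (p.2 : ℝ) = 0 ∨ (p.2 : ℝ) = 1) :
    p ∈ squareBoundary := by
  rcases h with h | h | h | h
  · exact Or.inl (Subtype.ext (by simpa using h))
  · exact Or.inr (Or.inl (Subtype.ext (by simpa using h)))
  · exact Or.inr (Or.inr (Or.inl (Subtype.ext (by simpa using h))))
  · exact Or.inr (Or.inr (Or.inr (Subtype.ext (by simpa using h))))

lemma boundary_coe {p : I × I} (h : p ∈ squareBoundary) :
    (p.1 : ℝ) = 0 ∨ (p.1 : ℝ) = 1 ∨ (p.2 : ℝ) = 0 ∨ (p.2 : ℝ) = 1 := by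
  rcases h with h | h | h | h
  · exact Or.inl (by rw [h]; simp)
  · exact Or.inr (Or.inl (by rw [h]; simp))
  · exact Or.inr (Or.inr (Or.inl (by rw [h]; simp)))
  · exact Or.inr (Or.inr (Or.inr (by rw [h]; simp)))

lemma bd1 {x y : ℝ} (h : x = 0 ∨ x = 1 ∨ y = 0 ∨ y = 1) (t : ℝ) :
    clp (P1 x y t) ∈ squareBoundary := by
  rcases h with rfl | rfl | rfl | hy
  · apply mem_boundary_coe; left
    show (cl (0 * (y + t * (1 - y))) : ℝ) = 0
    rw [zero_mul, cl_zero]; simp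
  · apply mem_boundary_coe; right; right; left
    show (cl (y * (1 - 1) / (1 - 1 * y)) : ℝ) = 0
    norm_num [cl_zero]
  · apply mem_boundary_coe; right; right; left
    show (cl (0 * (1 - x) / (1 - x * 0)) : ℝ) = 0
    norm_num [cl_zero]
  · subst hy
    by_cases hx : x = 1
    · subst hx
      apply mem_boundary_coe; right; right; left
      show (cl (1 * (1 - 1) / (1 - 1 * 1)) : ℝ) = 0
      norm_num [cl_zero]
    · apply mem_boundary_coe; right; right; right
      show (cl (1 * (1 - x) / (1 - x * 1)) : ℝ) = 1
      rw [one_mul, mul_one, div_self (sub_ne_zero.2 (fun h => hx h.symm)), cl_one]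
      simp

lemma bd2 {x y : ℝ} (h : x = 0 ∨ x = 1 ∨ y = 0 ∨ y = 1) (t : ℝ) :
    clp (P2 x y t) ∈ squareBoundary := by
  rcases h with rfl | rfl | rfl | hy
  · apply mem_boundary_coe; left
    show (cl (0 : ℝ) : ℝ) = 0
    rw [cl_zero]; simp
  · apply mem_boundary_coe; right; left
    show (cl (1 : ℝ) : ℝ) = 1
    rw [cl_one]; simp
  · apply mem_boundary_coe; right; right; left
    show (cl (0 * ((1 - t) * (1 - x) / (1 - x * 0) + t)) : ℝ) = 0
    rw [zero_mul, cl_zero]; simp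
  · subst hy
    by_cases hx : x = 1
    · subst hx
      apply mem_boundary_coe; right; left
      show (cl (1 : ℝ) : ℝ) = 1
      rw [cl_one]; simp
    · apply mem_boundary_coe; right; right; right
      show (cl (1 * ((1 - t) * (1 - x) / (1 - x * 1) + t)) : ℝ) = 1
      have hx' : (1 : ℝ) - x ≠ 0 := sub_ne_zero.2 (fun h => hx h.symm)
      rw [one_mul, mul_one, mul_div_assoc, div_self hx', mul_one]
      rw [show (1 : ℝ) - t + t = 1 by ring, cl_one]; simp

lemma bd3 {c b : ℝ} (hb0 : 0 ≤ b) (hb1 : b ≤ 1) (hc0 : 0 ≤ c) (hc1 : c ≤ 1)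
    (h : c = 0 ∨ c = 1 ∨ b = 0 ∨ b = 1) (t : ℝ) :
    clp (P3 c b t) ∈ squareBoundary := by
  have hN : NN c b = 2⁻¹ := by
    have hc : |c - 2⁻¹| ≤ 2⁻¹ := abs_le.2 ⟨by linarith, by linarith⟩
    have hb : |b - 2⁻¹| ≤ 2⁻¹ := abs_le.2 ⟨by linarith, by linarith⟩
    rcases h with rfl | rfl | rfl | rfl
    · rw [NN, show |(0:ℝ) - 2⁻¹| = 2⁻¹ by rw [abs_sub_comm]; norm_num]
      exact max_eq_left hb
    · rw [NN, show |(1:ℝ) - 2⁻¹| = 2⁻¹ by norm_num]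
      exact max_eq_left hb
    · rw [NN, show |(0:ℝ) - 2⁻¹| = 2⁻¹ by rw [abs_sub_comm]; norm_num]
      exact max_eq_right hc
    · rw [NN, show |(1:ℝ) - 2⁻¹| = 2⁻¹ by norm_num]
      exact max_eq_right hc
  have hNne : NN c b ≠ 0 := by rw [hN]; norm_num
  have hm := MM_pos hNne t
  rcases max_cases (|A1 c b t|) (|A2 c b t|) with ⟨hM, -⟩ | ⟨hM, -⟩
  · have hMM : MM c b t = |A1 c b t| := hM
    have hA : A1 c b t ≠ 0 := by
      intro h0; rw [hMM, h0, abs_zero] at hm; exact lt_irrefl _ hm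
    rcases abs_cases (A1 c b t) with ⟨ha, -⟩ | ⟨ha, -⟩
    · apply mem_boundary_coe; right; left
      show (cl (2⁻¹ + A1 c b t * (NN c b / MM c b t)) : ℝ) = 1
      rw [hN, hMM, ha, show (2⁻¹ : ℝ) + A1 c b t * (2⁻¹ / A1 c b t) = 1 by
        field_simp; ring_nf, cl_one]
      simp
    · apply mem_boundary_coe; left
      show (cl (2⁻¹ + A1 c b t * (NN c b / MM c b t)) : ℝ) = 0
      rw [hN, hMM, ha, show (2⁻¹ : ℝ) + A1 c b t * (2⁻¹ / -(A1 c b t)) = 0 by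
        field_simp; ring_nf, cl_zero]
      simp
  · have hMM : MM c b t = |A2 c b t| := hM
    have hA : A2 c b t ≠ 0 := by
      intro h0; rw [hMM, h0, abs_zero] at hm; exact lt_irrefl _ hm
    rcases abs_cases (A2 c b t) with ⟨ha, -⟩ | ⟨ha, -⟩
    · apply mem_boundary_coe; right; right; right
      show (cl (2⁻¹ + A2 c b t * (NN c b / MM c b t)) : ℝ) = 1
      rw [hN, hMM, ha, show (2⁻¹ : ℝ) + A2 c b t * (2⁻¹ / A2 c b t) = 1 by
        field_simp; ring_nf, cl_one]
      simp
    · apply mem_boundary_coe; right; right; left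
      show (cl (2⁻¹ + A2 c b t * (NN c b / MM c b t)) : ℝ) = 0
      rw [hN, hMM, ha, show (2⁻¹ : ℝ) + A2 c b t * (2⁻¹ / -(A2 c b t)) = 0 by
        field_simp; ring_nf, cl_zero]
      simp

/-! ### The three pieces of the homotopy as maps into the quotient -/

def HQ1 (q : (I × I) × I) : SquareQuotient :=
  mkq (clp (P1 (q.1.2 : ℝ) (1 - (q.1.1 : ℝ)) (3 * (q.2 : ℝ))))

def HQ2 (q : (I × I) × I) : SquareQuotient :=
  mkq (clp (P2 (q.1.2 : ℝ) (1 - (q.1.1 : ℝ)) (3 * (q.2 : ℝ) - 1)))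

def HQ3 (q : (I × I) × I) : SquareQuotient :=
  mkq (clp (P3 (q.1.1 : ℝ) (q.1.2 : ℝ) (3 * (q.2 : ℝ) - 2)))

def Hbar (q : (I × I) × I) : SquareQuotient :=
  if (q.2 : ℝ) ≤ 3⁻¹ then HQ1 q else if (q.2 : ℝ) ≤ 2/3 then HQ2 q else HQ3 q

lemma cont_c : Continuous fun q : (I × I) × I => (q.1.1 : ℝ) :=
  continuous_subtype_val.comp (continuous_fst.comp continuous_fst)

lemma cont_b : Continuous fun q : (I × I) × I => (q.1.2 : ℝ) :=
  continuous_subtype_val.comp (continuous_snd.comp continuous_fst)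

lemma cont_s : Continuous fun q : (I × I) × I => (q.2 : ℝ) :=
  continuous_subtype_val.comp continuous_snd

lemma denom_ne {p : I × I} (hp : p ≠ ((0 : I), (1 : I))) :
    1 - (p.2 : ℝ) * (1 - (p.1 : ℝ)) ≠ 0 := by
  intro h
  have hb0 : (0 : ℝ) ≤ p.2 := p.2.2.1
  have hb1 : (p.2 : ℝ) ≤ 1 := p.2.2.2
  have hc0 : (0 : ℝ) ≤ p.1 := p.1.2.1
  have hc1 : (p.1 : ℝ) ≤ 1 := p.1.2.2
  have hb : (p.2 : ℝ) = 1 := by nlinarith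
  have hc : (p.1 : ℝ) = 0 := by nlinarith
  exact hp (Prod.ext (Subtype.ext (by simpa using hc)) (Subtype.ext (by simpa using hb)))

/-- Shared "tube lemma" argument: a family whose first output coordinate tends
uniformly to `1` near a point is continuous there into the quotient. -/
lemma tendsto_mkq_of_fst (f : (I × I) × I → I × I) (q0 : (I × I) × I)
    (hval : f q0 ∈ squareBoundary)
    (hbig : ∀ ε, 0 < ε → ∀ᶠ q in nhds q0, 1 - ε < ((f q).1 : ℝ)) :
    Filter.Tendsto (fun q => mkq (f q)) (nhds q0) (nhds (mkq (f q0))) := by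
  intro U hU
  rw [Filter.mem_map]
  obtain ⟨W, hWU, hWopen, hWmem⟩ := mem_nhds_iff.1 hU
  set V := mkq ⁻¹' W with hVdef
  have hVopen : IsOpen V := hWopen.preimage continuous_mkq
  have hedge : (({(1 : I)} : Set I) ×ˢ (univ : Set I)) ⊆ V := by
    rintro ⟨a, y⟩ ⟨ha, -⟩
    simp only [mem_singleton_iff] at ha; subst ha
    show mkq ((1 : I), y) ∈ W
    rw [mkq_eq_mkq_of_boundary (mem_boundary_coe (Or.inr (Or.inl (by simp)))) hval]
    exact hWmem
  have hcomp : IsCompact (({(1 : I)} : Set I) ×ˢ (univ : Set I)) :=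
    isCompact_singleton.prod isCompact_univ
  obtain ⟨δ, hδ, hthick⟩ := hcomp.exists_thickening_subset_open hVopen hedge
  filter_upwards [hbig δ hδ] with q hq
  apply hWU
  apply hthick
  rw [Metric.mem_thickening_iff]
  refine ⟨((1 : I), (f q).2), ⟨mem_singleton _, mem_univ _⟩, ?_⟩
  rw [Prod.dist_eq]
  apply max_lt
  · rw [Subtype.dist_eq, Real.dist_eq]
    have h1 : ((f q).1 : ℝ) ≤ 1 := (f q).1.2.2
    have h2 : ((1 : I) : ℝ) = 1 := by simp
    rw [h2]
    rw [abs_lt]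
    constructor <;> linarith
  · simpa using hδ

lemma coe_cl (x : ℝ) : (cl x : ℝ) = max 0 (min 1 x) := rfl

lemma cont_HQ1 : Continuous HQ1 := by
  rw [continuous_iff_continuousAt]
  intro q0
  by_cases hq : q0.1 = ((0 : I), (1 : I))
  · have hval : clp (P1 ((q0.1.2 : ℝ)) (1 - (q0.1.1 : ℝ)) (3 * (q0.2 : ℝ))) ∈ squareBoundary :=
      bd1 (Or.inr (Or.inl (by rw [hq]; simp))) _
    refine tendsto_mkq_of_fst (fun q => clp (P1 ((q.1.2 : ℝ)) (1 - (q.1.1 : ℝ)) (3 * (q.2 : ℝ)))) q0 hval ?_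
    intro ε hε
    have hcont : ContinuousAt (fun q : (I × I) × I => (q.1.2 : ℝ) * (1 - (q.1.1 : ℝ))) q0 :=
      (cont_b.mul (continuous_const.sub cont_c)).continuousAt
    have hval1 : (q0.1.2 : ℝ) * (1 - (q0.1.1 : ℝ)) = 1 := by rw [hq]; simp
    have hev := hcont.preimage_mem_nhds (Ioi_mem_nhds (show 1 - ε < (q0.1.2 : ℝ) * (1 - (q0.1.1 : ℝ)) by rw [hval1]; linarith))
    filter_upwards [hev] with q hq'
    simp only [mem_preimage, mem_Ioi] at hq'
    set x := (q.1.2 : ℝ) with hx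
    set y := (1 - (q.1.1 : ℝ)) with hy
    have hx0 : 0 ≤ x := q.1.2.2.1
    have hx1 : x ≤ 1 := q.1.2.2.2
    have hy0 : 0 ≤ y := by have := q.1.1.2.2; simp only [hy]; linarith
    have hy1 : y ≤ 1 := by have := q.1.1.2.1; simp only [hy]; linarith
    have hs0 : (0 : ℝ) ≤ q.2 := q.2.2.1
    show 1 - ε < (cl (x * (y + 3 * (q.2 : ℝ) * (1 - y))) : ℝ)
    rw [coe_cl]
    have harg : x * y ≤ x * (y + 3 * (q.2 : ℝ) * (1 - y)) := by
      nlinarith [mul_nonneg (mul_nonneg hx0 (by linarith : (0:ℝ) ≤ 3 * (q.2 : ℝ))) (by linarith : (0:ℝ) ≤ 1 - y)]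
    have hxy1 : x * y ≤ 1 := by nlinarith
    have hmin : x * y ≤ min 1 (x * (y + 3 * (q.2 : ℝ) * (1 - y))) := le_min hxy1 harg
    have : min 1 (x * (y + 3 * (q.2 : ℝ) * (1 - y))) ≤ max 0 (min 1 (x * (y + 3 * (q.2 : ℝ) * (1 - y)))) := le_max_right _ _
    linarith
  · apply ContinuousAt.comp (continuous_mkq.comp continuous_clp).continuousAt
    have hden : 1 - (q0.1.2 : ℝ) * (1 - (q0.1.1 : ℝ)) ≠ 0 := denom_ne hq
    exact ContinuousAt.prodMk
      ((cont_b.mul ((continuous_const.sub cont_c).add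
        ((continuous_const.mul cont_s).mul
          (continuous_const.sub (continuous_const.sub cont_c))))).continuousAt)
      (ContinuousAt.div
        (((continuous_const.sub cont_c).mul (continuous_const.sub cont_b)).continuousAt)
        ((continuous_const.sub (cont_b.mul (continuous_const.sub cont_c))).continuousAt)
        hden)

lemma cont_HQ2 : Continuous HQ2 := by
  rw [continuous_iff_continuousAt]
  intro q0
  by_cases hq : q0.1 = ((0 : I), (1 : I))
  · have hval : clp (P2 ((q0.1.2 : ℝ)) (1 - (q0.1.1 : ℝ)) (3 * (q0.2 : ℝ) - 1)) ∈ squareBoundary :=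
      bd2 (Or.inr (Or.inl (by rw [hq]; simp))) _
    refine tendsto_mkq_of_fst (fun q => clp (P2 ((q.1.2 : ℝ)) (1 - (q.1.1 : ℝ)) (3 * (q.2 : ℝ) - 1))) q0 hval ?_
    intro ε hε
    have hcont : ContinuousAt (fun q : (I × I) × I => (q.1.2 : ℝ)) q0 := cont_b.continuousAt
    have hval1 : (q0.1.2 : ℝ) = 1 := by rw [hq]; simp
    have hev := hcont.preimage_mem_nhds (Ioi_mem_nhds (show 1 - ε < (q0.1.2 : ℝ) by rw [hval1]; linarith))
    filter_upwards [hev] with q hq'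
    simp only [mem_preimage, mem_Ioi] at hq'
    have hx1 : (q.1.2 : ℝ) ≤ 1 := q.1.2.2.2
    show 1 - ε < (cl ((q.1.2 : ℝ)) : ℝ)
    rw [coe_cl]
    have hmin : min 1 (q.1.2 : ℝ) = (q.1.2 : ℝ) := min_eq_right hx1
    rw [hmin]
    have := le_max_right (0 : ℝ) ((q.1.2 : ℝ))
    linarith
  · apply ContinuousAt.comp (continuous_mkq.comp continuous_clp).continuousAt
    have hden : 1 - (q0.1.2 : ℝ) * (1 - (q0.1.1 : ℝ)) ≠ 0 := denom_ne hq
    exact ContinuousAt.prodMk cont_b.continuousAt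
      (ContinuousAt.mul (continuous_const.sub cont_c).continuousAt
        (ContinuousAt.add
          (ContinuousAt.div
            (((continuous_const.sub ((continuous_const.mul cont_s).sub continuous_const)).mul
              (continuous_const.sub cont_b)).continuousAt)
            ((continuous_const.sub (cont_b.mul (continuous_const.sub cont_c))).continuousAt)
            hden)
          ((continuous_const.mul cont_s).sub continuous_const).continuousAt))

lemma cont_HQ3 : Continuous HQ3 := by
  have ct : Continuous fun q : (I × I) × I => 3 * (q.2 : ℝ) - 2 :=
    (continuous_const.mul cont_s).sub continuous_const
  have cA1 : Continuous fun q : (I × I) × I =>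
      A1 ((q.1.1 : ℝ)) ((q.1.2 : ℝ)) (3 * (q.2 : ℝ) - 2) :=
    (ct.mul (cont_c.sub continuous_const)).sub
      ((ct.sub continuous_const).mul (cont_b.sub continuous_const))
  have cA2 : Continuous fun q : (I × I) × I =>
      A2 ((q.1.1 : ℝ)) ((q.1.2 : ℝ)) (3 * (q.2 : ℝ) - 2) :=
    (ct.mul (cont_b.sub continuous_const)).add
      ((ct.sub continuous_const).mul (cont_c.sub continuous_const))
  have cNN : Continuous fun q : (I × I) × I => NN ((q.1.1 : ℝ)) ((q.1.2 : ℝ)) :=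
    ((cont_c.sub continuous_const).abs).max ((cont_b.sub continuous_const).abs)
  have cMM : Continuous fun q : (I × I) × I =>
      MM ((q.1.1 : ℝ)) ((q.1.2 : ℝ)) (3 * (q.2 : ℝ) - 2) := cA1.abs.max cA2.abs
  have key : Continuous fun q : (I × I) × I =>
      P3 ((q.1.1 : ℝ)) ((q.1.2 : ℝ)) (3 * (q.2 : ℝ) - 2) := by
    rw [continuous_iff_continuousAt]
    intro q0
    by_cases hmid : NN ((q0.1.1 : ℝ)) ((q0.1.2 : ℝ)) = 0
    · have hc : (q0.1.1 : ℝ) - 2⁻¹ = 0 :=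
        abs_eq_zero.1 (le_antisymm (hmid ▸ le_max_left _ _) (abs_nonneg _))
      have hb : (q0.1.2 : ℝ) - 2⁻¹ = 0 :=
        abs_eq_zero.1 (le_antisymm (hmid ▸ le_max_right _ _) (abs_nonneg _))
      have hval : P3 ((q0.1.1 : ℝ)) ((q0.1.2 : ℝ)) (3 * (q0.2 : ℝ) - 2) = (2⁻¹, 2⁻¹) := by
        simp only [P3, A1, A2, hc, hb]
        norm_num
      rw [ContinuousAt, hval]
      rw [Metric.tendsto_nhds]
      intro ε hε
      have hev := (cNN.continuousAt (x := q0)).preimage_mem_nhds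
        (Iio_mem_nhds (show NN ((q0.1.1 : ℝ)) ((q0.1.2 : ℝ)) < ε by rw [hmid]; exact hε))
      filter_upwards [hev] with q hq
      simp only [mem_preimage, mem_Iio] at hq
      rw [Prod.dist_eq]
      apply max_lt
      · rw [Real.dist_eq]
        have h1 : (2⁻¹ : ℝ) + A1 ((q.1.1 : ℝ)) ((q.1.2 : ℝ)) (3 * (q.2 : ℝ) - 2) *
            (NN ((q.1.1 : ℝ)) ((q.1.2 : ℝ)) / MM ((q.1.1 : ℝ)) ((q.1.2 : ℝ)) (3 * (q.2 : ℝ) - 2)) - 2⁻¹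
            = A1 ((q.1.1 : ℝ)) ((q.1.2 : ℝ)) (3 * (q.2 : ℝ) - 2) *
            (NN ((q.1.1 : ℝ)) ((q.1.2 : ℝ)) / MM ((q.1.1 : ℝ)) ((q.1.2 : ℝ)) (3 * (q.2 : ℝ) - 2)) := by
          ring
        simp only [P3]
        rw [h1]
        exact lt_of_le_of_lt (abs_P3_le (le_max_left _ _)) hq
      · rw [Real.dist_eq]
        have h1 : (2⁻¹ : ℝ) + A2 ((q.1.1 : ℝ)) ((q.1.2 : ℝ)) (3 * (q.2 : ℝ) - 2) *
            (NN ((q.1.1 : ℝ)) ((q.1.2 : ℝ)) / MM ((q.1.1 : ℝ)) ((q.1.2 : ℝ)) (3 * (q.2 : ℝ) - 2)) - 2⁻¹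
            = A2 ((q.1.1 : ℝ)) ((q.1.2 : ℝ)) (3 * (q.2 : ℝ) - 2) *
            (NN ((q.1.1 : ℝ)) ((q.1.2 : ℝ)) / MM ((q.1.1 : ℝ)) ((q.1.2 : ℝ)) (3 * (q.2 : ℝ) - 2)) := by
          ring
        simp only [P3]
        rw [h1]
        exact lt_of_le_of_lt (abs_P3_le (le_max_right _ _)) hq
    · have hMne : MM ((q0.1.1 : ℝ)) ((q0.1.2 : ℝ)) (3 * (q0.2 : ℝ) - 2) ≠ 0 :=
        (MM_pos hmid _).ne'
      exact ContinuousAt.prodMk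
        (ContinuousAt.add continuousAt_const
          (ContinuousAt.mul cA1.continuousAt
            (ContinuousAt.div cNN.continuousAt cMM.continuousAt hMne)))
        (ContinuousAt.add continuousAt_const
          (ContinuousAt.mul cA2.continuousAt
            (ContinuousAt.div cNN.continuousAt cMM.continuousAt hMne)))
  exact (continuous_mkq.comp continuous_clp).comp key

lemma junc1 {q : (I × I) × I} (h : (q.2 : ℝ) = 3⁻¹) : HQ1 q = HQ2 q := by
  have h2 : P1 ((q.1.2 : ℝ)) (1 - (q.1.1 : ℝ)) (3 * (q.2 : ℝ))
      = P2 ((q.1.2 : ℝ)) (1 - (q.1.1 : ℝ)) (3 * (q.2 : ℝ) - 1) := by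
    rw [h]
    simp only [P1, P2, Prod.mk.injEq]
    constructor <;> ring
  unfold HQ1 HQ2
  rw [h2]

lemma junc2 {q : (I × I) × I} (h : (q.2 : ℝ) = 2 / 3) : HQ2 q = HQ3 q := by
  have h2 : P2 ((q.1.2 : ℝ)) (1 - (q.1.1 : ℝ)) (3 * (q.2 : ℝ) - 1)
      = ((q.1.2 : ℝ), 1 - (q.1.1 : ℝ)) := by
    rw [h]
    simp only [P2, Prod.mk.injEq]
    refine ⟨trivial, ?_⟩
    ring
  have ht : 3 * (q.2 : ℝ) - 2 = 0 := by rw [h]; norm_num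
  have h3 : P3 ((q.1.1 : ℝ)) ((q.1.2 : ℝ)) (3 * (q.2 : ℝ) - 2)
      = ((q.1.2 : ℝ), 1 - (q.1.1 : ℝ)) := by rw [ht, P3_zero]
  unfold HQ2 HQ3
  rw [h2, h3]

lemma cont_Hbar : Continuous Hbar := by
  unfold Hbar
  apply Continuous.if_le
  · exact cont_HQ1
  · apply Continuous.if_le cont_HQ2 cont_HQ3 cont_s continuous_const
    intro q hq
    exact junc2 hq
  · exact cont_s
  · exact continuous_const
  · intro q hq
    rw [if_pos (show (q.2 : ℝ) ≤ 2 / 3 by rw [hq]; norm_num)]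
    exact junc1 hq

lemma Hbar_boundary {p : I × I} (hp : p ∈ squareBoundary) (s : I) :
    Hbar (p, s) = squareBasePoint := by
  have h := boundary_coe hp
  have hxy : (p.2 : ℝ) = 0 ∨ (p.2 : ℝ) = 1 ∨ (1 - (p.1 : ℝ)) = 0 ∨ (1 - (p.1 : ℝ)) = 1 := by
    rcases h with h | h | h | h
    · right; right; right; linarith
    · right; right; left; linarith
    · left; exact h
    · right; left; exact h
  unfold Hbar
  split_ifs
  · exact mkq_eq_base (bd1 hxy _)
  · exact mkq_eq_base (bd2 hxy _)
  · exact mkq_eq_base (bd3 p.2.2.1 p.2.2.2 p.1.2.1 p.1.2.2 h _)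

def Hcm : C((I × I) × I, SquareQuotient) := ⟨Hbar, cont_Hbar⟩

def Hlift : SquareQuotient → C(I, SquareQuotient) :=
  Quotient.lift (fun p => Hcm.curry p)
    (by
      intro a b hab
      rcases hab with rfl | ⟨h1, h2⟩
      · rfl
      · ext s
        show Hbar (a, s) = Hbar (b, s)
        rw [Hbar_boundary h1 s, Hbar_boundary h2 s])

def Hfull : SquareQuotient × I → SquareQuotient := fun zs => Hlift zs.1 zs.2

lemma cont_Hfull : Continuous Hfull := by
  have h : Continuous Hlift := (Hcm.curry.continuous).quotient_lift _
  exact continuous_eval.comp (h.prodMap continuous_id)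

end

end SigmaRep

/-- There is a well-defined continuous pointed self-map `f` of
`Q = (I × I)/∂(I × I)` sending the class of `(c, b) ≠ (0, 1)` to the class of
`((1 - c)·b, (1 - c)·(1 - b)/(1 - (1 - c)·b))` and the base point to the base point,
and `f` is pointed homotopic to the identity of `Q`.  This is the key topological
input in the proof of Proposition 2.6. -/
theorem sigma_reparametrization_pointed_homotopic_id :
    ∃ f : SquareQuotient → SquareQuotient, Continuous f ∧
      f squareBasePoint = squareBasePoint ∧
      (∀ p : I × I, p ≠ ((0 : I), (1 : I)) →
        ∀ q : I × I,
          (q.1 : ℝ) = (1 - (p.1 : ℝ)) * (p.2 : ℝ) →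
          (q.2 : ℝ) =
            (1 - (p.1 : ℝ)) * (1 - (p.2 : ℝ)) / (1 - (1 - (p.1 : ℝ)) * (p.2 : ℝ)) →
          f (Quotient.mk squareCollapse p) = Quotient.mk squareCollapse q) ∧
      ∃ H : SquareQuotient × I → SquareQuotient, Continuous H ∧
        (∀ x, H (x, 0) = f x) ∧ (∀ x, H (x, 1) = x) ∧
        (∀ s : I, H (squareBasePoint, s) = squareBasePoint) := by
  classical
  refine ⟨fun z => SigmaRep.Hfull (z, 0), ?_, ?_, ?_, SigmaRep.Hfull, SigmaRep.cont_Hfull,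
    fun x => rfl, ?_, ?_⟩
  · exact SigmaRep.cont_Hfull.comp (continuous_id.prodMk continuous_const)
  · exact SigmaRep.Hbar_boundary SigmaRep.base_mem_boundary 0
  · intro p hp q hq1 hq2
    show SigmaRep.Hbar (p, 0) = Quotient.mk squareCollapse q
    unfold SigmaRep.Hbar
    rw [if_pos (show (((0 : I) : ℝ)) ≤ 3⁻¹ by norm_num)]
    show SigmaRep.mkq (SigmaRep.clp
      (SigmaRep.P1 ((p.2 : ℝ)) (1 - (p.1 : ℝ)) (3 * ((0 : I) : ℝ)))) = _
    have hden : 1 - (p.2 : ℝ) * (1 - (p.1 : ℝ)) ≠ 0 := SigmaRep.denom_ne hp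
    have hcl : SigmaRep.clp
        (SigmaRep.P1 ((p.2 : ℝ)) (1 - (p.1 : ℝ)) (3 * ((0 : I) : ℝ))) = q := by
      have e1 : (p.2 : ℝ) * ((1 - (p.1 : ℝ)) + 3 * ((0 : I) : ℝ) * (1 - (1 - (p.1 : ℝ))))
          = (q.1 : ℝ) := by
        rw [hq1]; simp; ring
      have e2 : (1 - (p.1 : ℝ)) * (1 - (p.2 : ℝ)) / (1 - (p.2 : ℝ) * (1 - (p.1 : ℝ)))
          = (q.2 : ℝ) := by
        rw [hq2, mul_comm ((p.2 : ℝ)) (1 - (p.1 : ℝ))]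
      exact Prod.ext (SigmaRep.cl_coe_of_eq e1) (SigmaRep.cl_coe_of_eq e2)
    rw [hcl]
    rfl
  · intro x
    obtain ⟨p⟩ := x
    show SigmaRep.Hbar (p, 1) = Quotient.mk squareCollapse p
    unfold SigmaRep.Hbar
    rw [if_neg (show ¬ (((1 : I) : ℝ)) ≤ 3⁻¹ by norm_num),
      if_neg (show ¬ (((1 : I) : ℝ)) ≤ 2 / 3 by norm_num)]
    show SigmaRep.mkq (SigmaRep.clp
      (SigmaRep.P3 ((p.1 : ℝ)) ((p.2 : ℝ)) (3 * ((1 : I) : ℝ) - 2))) = _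
    have ht : 3 * ((1 : I) : ℝ) - 2 = 1 := by norm_num
    rw [ht, SigmaRep.P3_one]
    have hcl : SigmaRep.clp ((p.1 : ℝ), (p.2 : ℝ)) = p :=
      Prod.ext (SigmaRep.cl_coe p.1) (SigmaRep.cl_coe p.2)
    rw [hcl]
    rfl
  · intro s
    exact SigmaRep.Hbar_boundary SigmaRep.base_mem_boundary s
end
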